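/- Let a = a₀ + N be an element of a commutative ring where a₀ is a positive real scalar and N is nilpotent with N^(n+1) = 0. Define a^p := ∑_{j=0}^{n} (N^j / j!) · (-1)^j · (-p)_j · a₀^(p-j), where (q)_j is the rising Pochhammer symbol. Then for all real p, q: a^p · a^q = a^(p+q). -/

import Mathlib

lemma neg_one_pow_mul_ascPochhammer (p : ℝ) (j : ℕ) :
    (-1:ℝ)^j * (ascPochhammer ℝ j).eval (-p) = (j.factorial : ℝ) * Ring.choose p j := by
  rw [← Polynomial.ascPochhammer_smeval_eq_eval,
    Polynomial.ascPochhammer_smeval_neg_eq_descPochhammer,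
    Ring.descPochhammer_eq_factorial_smul_choose, Units.smul_def, zsmul_eq_mul,
    Int.cast_negOnePow_natCast, nsmul_eq_mul, ← mul_assoc, ← mul_pow]
  norm_num [nsmul_eq_mul]

/-- Truncated binomial-series power `a ^ p` for an element `a = a₀·1 + K` of a commutative
`ℝ`-algebra, with positive real body `a₀` and nilpotent part `K` satisfying `K ^ (n+1) = 0`:
`a ^ p = ∑_{j=0}^{n} (K^j / j!) · (-1)^j · (-p)_j · a₀ ^ (p - j)`,
where `(q)_j` is the rising Pochhammer symbol. -/
noncomputable def superPow {A : Type*} [CommRing A] [Algebra ℝ A] (n : ℕ)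
    (x₀ : ℝ) (K : A) (p : ℝ) : A :=
  ∑ j ∈ Finset.range (n + 1),
    (((-1 : ℝ) ^ j * (ascPochhammer ℝ j).eval (-p) * x₀ ^ (p - (j : ℝ))) / (j.factorial : ℝ))
      • K ^ j

lemma superPow_eq {A : Type*} [CommRing A] [Algebra ℝ A] (n : ℕ)
    (x₀ : ℝ) (K : A) (p : ℝ) :
    superPow n x₀ K p =
      ∑ j ∈ Finset.range (n + 1), (Ring.choose p j * x₀ ^ (p - (j : ℝ))) • K ^ j := by
  unfold superPow
  refine Finset.sum_congr rfl fun j _ => ?_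
  congr 1
  have hj : (j.factorial : ℝ) ≠ 0 := Nat.cast_ne_zero.mpr j.factorial_ne_zero
  field_simp
  linear_combination x₀ ^ (p - (j:ℝ)) * neg_one_pow_mul_ascPochhammer p j

/-- For `a = a₀ + N` with `a₀ > 0` and `N` nilpotent with `N^(n+1) = 0`,
one has `a^p · a^q = a^(p+q)` for all real `p, q`. -/
theorem superPow_mul_superPow {A : Type*} [CommRing A] [Algebra ℝ A] (n : ℕ)
    (a₀ : ℝ) (ha : 0 < a₀) (N : A) (hN : N ^ (n + 1) = 0) (p q : ℝ) :
    superPow n a₀ N p * superPow n a₀ N q = superPow n a₀ N (p + q) := by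
  classical
  rw [superPow_eq, superPow_eq, superPow_eq]
  set F : ℕ × ℕ → A := fun ij =>
    ((Ring.choose p ij.1 * a₀ ^ (p - (ij.1 : ℝ))) *
     (Ring.choose q ij.2 * a₀ ^ (q - (ij.2 : ℝ)))) • N ^ (ij.1 + ij.2) with hF
  have hzero : ∀ i j : ℕ, n < i + j → N ^ (i + j) = 0 := by
    intro i j h
    have h1 : i + j = (i + j - (n+1)) + (n+1) := by omega
    rw [h1, pow_add, hN, mul_zero]
  -- LHS as a sum over the product finset
  have hL : (∑ j ∈ Finset.range (n + 1), (Ring.choose p j * a₀ ^ (p - (j : ℝ))) • N ^ j) *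
      (∑ j ∈ Finset.range (n + 1), (Ring.choose q j * a₀ ^ (q - (j : ℝ))) • N ^ j) =
      ∑ ij ∈ Finset.range (n+1) ×ˢ Finset.range (n+1), F ij := by
    rw [Finset.sum_mul_sum, Finset.sum_product]
    refine Finset.sum_congr rfl fun i _ => Finset.sum_congr rfl fun j _ => ?_
    rw [hF, smul_mul_smul_comm, ← pow_add]
  rw [hL]
  -- drop terms with i + j > n
  rw [← Finset.sum_filter_add_sum_filter_not
    (Finset.range (n+1) ×ˢ Finset.range (n+1)) (fun ij => ij.1 + ij.2 ≤ n)]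
  have h2 : ∑ ij ∈ (Finset.range (n+1) ×ˢ Finset.range (n+1)).filter
      (fun ij => ¬ ij.1 + ij.2 ≤ n), F ij = 0 := by
    refine Finset.sum_eq_zero fun ij hij => ?_
    simp only [Finset.mem_filter, not_le] at hij
    rw [hF]
    simp [hzero ij.1 ij.2 hij.2]
  rw [h2, add_zero]
  have hset : (Finset.range (n+1) ×ˢ Finset.range (n+1)).filter
      (fun ij => ij.1 + ij.2 ≤ n) = (Finset.range (n+1)).biUnion Finset.HasAntidiagonal.antidiagonal := by
    ext ⟨i, j⟩
    simp only [Finset.mem_filter, Finset.mem_product, Finset.mem_range, Finset.mem_biUnion,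
      Finset.HasAntidiagonal.mem_antidiagonal]
    constructor
    · rintro ⟨⟨hi, hj⟩, hk⟩; exact ⟨i + j, by omega, rfl⟩
    · rintro ⟨k, hk, rfl⟩; omega
  rw [hset, Finset.sum_biUnion]
  · refine Finset.sum_congr rfl fun k hk => ?_
    rw [Ring.add_choose_eq k (mul_comm p q), Finset.sum_mul, Finset.sum_smul]
    refine Finset.sum_congr rfl fun ij hij => ?_
    rw [Finset.HasAntidiagonal.mem_antidiagonal] at hij
    rw [hF]
    subst hij
    have hcast : ((ij.1 + ij.2 : ℕ) : ℝ) = (ij.1 : ℝ) + (ij.2 : ℝ) := by push_cast; ring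
    have hrpow : a₀ ^ (p + q - ((ij.1 + ij.2 : ℕ) : ℝ)) =
        a₀ ^ (p - (ij.1 : ℝ)) * a₀ ^ (q - (ij.2 : ℝ)) := by
      rw [← Real.rpow_add ha, hcast]; ring_nf
    rw [hrpow]
    ring_nf
  · intro x _ y _ hxy
    simp only [Finset.disjoint_left, Finset.HasAntidiagonal.mem_antidiagonal]
    rintro ⟨i, j⟩ h1 h2
    exact hxy (h1 ▸ h2)
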